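/- Let {aₙ}ₙ≥1 be a nonnegative real sequence for which there exists a subsequence {a_{n_j}} with a_{n_j} < a_{n_j + 1} for all j ≥ 1. For n ≥ n₀ define ν(n) = max{k ∈ ℕ : n₀ ≤ k ≤ n, a_k < a_{k+1}}. Then ν is nondecreasing, ν(n) → ∞ as n → ∞, and for all n ≥ n₀ one has a_{ν(n)} ≤ a_{ν(n)+1} and aₙ ≤ a_{ν(n)+1}. -/
import Mathlib


theorem mainge_lemma (a : ℕ → ℝ) (ha : ∀ n, 0 ≤ a n)
    (φ : ℕ → ℕ) (hφ : StrictMono φ) (hsub : ∀ j, a (φ j) < a (φ j + 1))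
    (n₀ : ℕ)
    (hne : ∀ n, n₀ ≤ n → ∃ m, n₀ ≤ m ∧ m ≤ n ∧ a m < a (m + 1))
    (ν : ℕ → ℕ)
    (hν : ∀ n, ν n = sSup {m | n₀ ≤ m ∧ m ≤ n ∧ a m < a (m + 1)}) :
    (∀ m n, n₀ ≤ m → m ≤ n → ν m ≤ ν n) ∧
      Filter.Tendsto ν Filter.atTop Filter.atTop ∧
      (∀ n, n₀ ≤ n → a (ν n) ≤ a (ν n + 1) ∧ a n ≤ a (ν n + 1)) := by
  set S : ℕ → Set ℕ := fun n => {m | n₀ ≤ m ∧ m ≤ n ∧ a m < a (m + 1)} with hS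
  have hbdd : ∀ n, BddAbove (S n) := fun n => ⟨n, fun m hm => hm.2.1⟩
  have hnem : ∀ n, n₀ ≤ n → (S n).Nonempty := fun n hn => hne n hn
  have hmem : ∀ n, n₀ ≤ n → ν n ∈ S n := by
    intro n hn
    rw [hν]
    exact Nat.sSup_mem (hnem n hn) (hbdd n)
  have hle : ∀ n, ∀ m ∈ S n, m ≤ ν n := by
    intro n m hm
    rw [hν]
    exact le_csSup (hbdd n) hm
  refine ⟨?_, ?_, ?_⟩
  · intro m n hm hmn
    exact hle n (ν m) ⟨(hmem m hm).1, le_trans (hmem m hm).2.1 hmn, (hmem m hm).2.2⟩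
  · rw [Filter.tendsto_atTop]
    intro b
    rw [Filter.eventually_atTop]
    refine ⟨φ (max b n₀), fun n hn => ?_⟩
    have h1 : max b n₀ ≤ φ (max b n₀) := hφ.le_apply
    have : φ (max b n₀) ∈ S n :=
      ⟨le_trans (le_max_right _ _) h1, hn, hsub _⟩
    exact le_trans (le_trans (le_max_left b n₀) h1) (hle n _ this)
  · intro n hn
    obtain ⟨h1, h2, h3⟩ := hmem n hn
    refine ⟨h3.le, ?_⟩
    have key : ∀ m, ν n + 1 ≤ m → m ≤ n → a m ≤ a (ν n + 1) := by
      intro m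
      induction m with
      | zero => intro h _; omega
      | succ k ih =>
        intro hk hkn
        rcases Nat.lt_or_ge (ν n) k with hlt | hge
        · have hk' : a (k + 1) ≤ a k := by
            by_contra hc
            push_neg at hc
            have : k ∈ S n := ⟨le_trans h1 hlt.le, le_trans (Nat.le_succ k) hkn, hc⟩
            exact absurd (hle n k this) (by omega)
          exact le_trans hk' (ih hlt (by omega))
        · have : k + 1 = ν n + 1 := by omega
          rw [this]
    rcases Nat.lt_or_ge (ν n) n with h | h
    · exact key n (by omega) le_rfl
    · have : ν n = n := le_antisymm h2 h
      rw [this] at h3 ⊢; exact h3.le
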